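/- arXiv:1609.05987 — 6 statements merged into one kernel-verified Lean document; each statement's English description precedes it below -/
import Mathlib

section
/- Let m, n ≥ 1 and let A be an invertible matrix indexed by (Fin m × Fin n) × (Fin m × Fin n) over ℂ. If the realignment R(A) has rank 1, then there exist invertible matrices A₁ : Matrix (Fin m) (Fin m) ℂ and A₂ : Matrix (Fin n) (Fin n) ℂ such that A (i,k) (j,l) = A₁ i j * A₂ k l for all i,j,k,l (i.e., A = A₁ ⊗ A₂ is a Kronecker product). -/
/-- The realignment of a matrix `A` indexed by `(Fin m × Fin n) × (Fin m × Fin n)`: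
`R(A) (i,j) (k,l) = A (i,k) (j,l)`. -/
def realign2 {m n : ℕ} (A : Matrix (Fin m × Fin n) (Fin m × Fin n) ℂ) :
    Matrix (Fin m × Fin m) (Fin n × Fin n) ℂ :=
  Matrix.of fun p q => A (p.1, q.1) (p.2, q.2)

lemma rank_one_factor {α β : Type*} [Fintype α] [Fintype β] [DecidableEq β]
    (M : Matrix α β ℂ) (h : M.rank = 1) :
    ∃ (u : α → ℂ) (v : β → ℂ), ∀ p q, M p q = u p * v q := by
  rw [Matrix.rank] at h
  obtain ⟨⟨u, hu_mem⟩, hu0, hspan⟩ := finrank_eq_one_iff'.mp h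
  choose c hc using fun q =>
    hspan ⟨M.mulVecLin (Pi.single q 1), LinearMap.mem_range_self _ _⟩
  refine ⟨u, c, fun p q => ?_⟩
  have := congrFun (congrArg Subtype.val (hc q)) p
  simp only [Submodule.coe_smul, Pi.smul_apply, smul_eq_mul, Matrix.mulVecLin_apply,
    Matrix.mulVec_single, mul_one, MulOpposite.op_one, one_smul, Matrix.col_apply] at this
  rw [← this]; ring

/-- If the realignment of an invertible matrix `A` on `(Fin m × Fin n)` has rank 1,
then `A` is a Kronecker product of invertible matrices `A₁ ⊗ A₂`. -/
theorem kronecker_of_realign_rank_one (m n : ℕ) (hm : 1 ≤ m) (hn : 1 ≤ n)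
    (A : Matrix (Fin m × Fin n) (Fin m × Fin n) ℂ) (hA : IsUnit A)
    (hrank : (realign2 A).rank = 1) :
    ∃ (A₁ : Matrix (Fin m) (Fin m) ℂ) (A₂ : Matrix (Fin n) (Fin n) ℂ),
      IsUnit A₁ ∧ IsUnit A₂ ∧ ∀ i j k l, A (i, k) (j, l) = A₁ i j * A₂ k l := by
  obtain ⟨u, v, huv⟩ := rank_one_factor _ hrank
  set A₁ : Matrix (Fin m) (Fin m) ℂ := Matrix.of fun i j => u (i, j)
  set A₂ : Matrix (Fin n) (Fin n) ℂ := Matrix.of fun k l => v (k, l)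
  have hfac : ∀ i j k l, A (i, k) (j, l) = A₁ i j * A₂ k l := by
    intro i j k l
    exact huv (i, j) (k, l)
  have hAeq : A = Matrix.kroneckerMap (· * ·) A₁ A₂ := by
    ext ⟨i, k⟩ ⟨j, l⟩
    exact hfac i j k l
  have hdet : IsUnit A.det := (Matrix.isUnit_iff_isUnit_det A).mp hA
  rw [hAeq, Matrix.det_kronecker] at hdet
  have h1' : IsUnit A₁.det := by
    have := isUnit_of_mul_isUnit_left hdet
    exact (isUnit_pow_iff (by simp; omega : (Fintype.card (Fin n)) ≠ 0)).mp this
  exact ⟨A₁, A₂, (Matrix.isUnit_iff_isUnit_det A₁).mpr h1',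
    (Matrix.isUnit_iff_isUnit_det A₂).mpr ((isUnit_pow_iff (by simp; omega)).mp
      (isUnit_of_mul_isUnit_right hdet)), hfac⟩
end

section
/- Let K ≥ 1, let n : Fin K → ℕ with n i ≥ 1 for all i, and let A be an invertible matrix indexed by (Π i : Fin K, Fin (n i)) × (Π i : Fin K, Fin (n i)) over ℂ. If for every i₀ : Fin K the realignment R_{i₀}(A) of A with respect to the bipartition {i₀} versus the remaining parties has rank 1, then there exist invertible matrices a i : Matrix (Fin (n i)) (Fin (n i)) ℂ, i : Fin K, such that A x y = ∏ i, a i (x i) (y i) for all x, y. -/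
lemma matrix_rank_one_fact {m p : Type*} [Fintype p] [DecidableEq p]
    (M : Matrix m p ℂ) (h : M.rank = 1) :
    ∃ u : m → ℂ, ∃ v : p → ℂ, ∀ i j, M i j = u i * v j := by
  rw [Matrix.rank, finrank_eq_one_iff'] at h
  obtain ⟨u, hu0, hspan⟩ := h
  have hcol : ∀ j : p, ∃ c : ℂ, ∀ i, c * (u : m → ℂ) i = M i j := by
    intro j
    have hmem : (fun i => M i j) ∈ LinearMap.range M.mulVecLin := by
      refine ⟨Pi.single j 1, ?_⟩
      simp [Matrix.mulVecLin_apply]; rfl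
    obtain ⟨c, hc⟩ := hspan ⟨_, hmem⟩
    refine ⟨c, fun i => ?_⟩
    have := congrArg (fun z => (z : (m → ℂ)) i) (congrArg Subtype.val hc)
    simpa using this
  choose v hv using hcol
  exact ⟨u, v, fun i j => by rw [← hv j i]; ring⟩



/-- Extend a local index `a` at position `i₀` and indices `f` on the remaining
positions to a full multi-index. -/
def extendIdx {ι : Type*} [DecidableEq ι] {m : ι → ℕ} (i₀ : ι) (a : Fin (m i₀))
    (f : ∀ j : {j : ι // j ≠ i₀}, Fin (m j)) : ∀ i, Fin (m i) :=
  fun i => if h : i = i₀ then cast (congrArg (fun k => Fin (m k)) h).symm a else f ⟨i, h⟩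

/-- The realignment of a matrix `A` indexed by multi-indices, with respect to the
bipartition `{i₀}` versus the remaining parties. -/
def realignAt {ι : Type*} [DecidableEq ι] {m : ι → ℕ}
    (A : Matrix (∀ i, Fin (m i)) (∀ i, Fin (m i)) ℂ) (i₀ : ι) :
    Matrix (Fin (m i₀) × Fin (m i₀))
      ((∀ j : {j : ι // j ≠ i₀}, Fin (m j)) × (∀ j : {j : ι // j ≠ i₀}, Fin (m j))) ℂ :=
  Matrix.of fun p q => A (extendIdx i₀ p.1 q.1) (extendIdx i₀ p.2 q.2)

lemma extendIdx_self {ι : Type*} [DecidableEq ι] {m : ι → ℕ} (i₀ : ι) (a : Fin (m i₀))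
    (f : ∀ j : {j : ι // j ≠ i₀}, Fin (m j)) : extendIdx i₀ a f i₀ = a := by
  simp [extendIdx]

lemma extendIdx_ne {ι : Type*} [DecidableEq ι] {m : ι → ℕ} (i₀ : ι) (a : Fin (m i₀))
    (f : ∀ j : {j : ι // j ≠ i₀}, Fin (m j)) (j : ι) (h : j ≠ i₀) :
    extendIdx i₀ a f j = f ⟨j, h⟩ := by
  simp [extendIdx, h]

lemma extendIdx_restrict {ι : Type*} [DecidableEq ι] {m : ι → ℕ} (i₀ : ι)
    (x : ∀ i, Fin (m i)) : extendIdx i₀ (x i₀) (fun j => x j) = x := by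
  funext j
  by_cases h : j = i₀
  · subst h; exact extendIdx_self _ _ _
  · exact extendIdx_ne _ _ _ _ h


/-- If every single-party realignment of an invertible matrix `A` on a `K`-fold
tensor index has rank 1, then `A` is a tensor product of invertible local matrices. -/
theorem tensor_of_realign_rank_one (K : ℕ) (hK : 1 ≤ K) (n : Fin K → ℕ)
    (hn : ∀ i, 1 ≤ n i)
    (A : Matrix (∀ i, Fin (n i)) (∀ i, Fin (n i)) ℂ) (hA : IsUnit A)
    (hrank : ∀ i₀ : Fin K, (realignAt A i₀).rank = 1) :
    ∃ a : ∀ i, Matrix (Fin (n i)) (Fin (n i)) ℂ,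
      (∀ i, IsUnit (a i)) ∧ ∀ x y, A x y = ∏ i, a i (x i) (y i) := by
  classical
  haveI : ∀ i, Nonempty (Fin (n i)) := fun i => ⟨⟨0, hn i⟩⟩
  haveI : Nonempty (∀ i, Fin (n i)) := ⟨fun i => Classical.arbitrary _⟩
  have hdet : A.det ≠ 0 := by
    have := A.isUnit_iff_isUnit_det.1 hA
    exact isUnit_iff_ne_zero.1 this
  -- a nonzero entry
  obtain ⟨e, f, hef⟩ : ∃ e f, A e f ≠ 0 := by
    by_contra h
    push_neg at h
    have : A = 0 := by ext x y; exact h x y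
    rw [this] at hdet
    exact hdet Matrix.det_zero
  -- rank one factorizations
  choose u v huv using fun i => matrix_rank_one_fact _ (hrank i)
  have hfac : ∀ (i : Fin K) (x y : ∀ i, Fin (n i)),
      A x y = u i (x i, y i) * v i (fun j => x j, fun j => y j) := by
    intro i x y
    have h1 := huv i (x i, y i) (fun j => x j, fun j => y j)
    simp only [realignAt, Matrix.of_apply] at h1
    rwa [extendIdx_restrict, extendIdx_restrict] at h1
  -- the cross identity
  have hcross : ∀ (i : Fin K) (x y x' y' : ∀ i, Fin (n i)),
      A x y * A x' y' =
      A (extendIdx i (x i) fun j => x' j) (extendIdx i (y i) fun j => y' j) *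
      A (extendIdx i (x' i) fun j => x j) (extendIdx i (y' i) fun j => y j) := by
    intro i x y x' y'
    rw [hfac i x y, hfac i x' y',
        hfac i (extendIdx i (x i) fun j => x' j) (extendIdx i (y i) fun j => y' j),
        hfac i (extendIdx i (x' i) fun j => x j) (extendIdx i (y' i) fun j => y j)]
    have r1 : ∀ (a : Fin (n i)) (g : ∀ j : {j : Fin K // j ≠ i}, Fin (n j)),
        (fun j : {j : Fin K // j ≠ i} => extendIdx i a g j) = g := by
      intro a g; funext j; rw [extendIdx_ne i a g j j.2]
    simp only [extendIdx_self, r1]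
    ring
  set c : ℂ := A e f with hc
  set N : ∀ i : Fin K, Matrix (Fin (n i)) (Fin (n i)) ℂ := fun i =>
    Matrix.of fun p q => A (extendIdx i p fun j => e j) (extendIdx i q fun j => f j) with hN
  -- main claim by induction over a finset of coordinates
  have hclaim : ∀ (x y : ∀ i, Fin (n i)) (S : Finset (Fin K)),
      A x y * c ^ S.card =
        (∏ i ∈ S, N i (x i) (y i)) *
        A (fun i => if i ∈ S then e i else x i) (fun i => if i ∈ S then f i else y i) := by
    intro x y S
    induction S using Finset.induction with
    | empty => simp
    | @insert i S hiS ih =>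
      set x' : ∀ i, Fin (n i) := fun j => if j ∈ S then e j else x j with hx'
      set y' : ∀ i, Fin (n i) := fun j => if j ∈ S then f j else y j with hy'
      have hstep := hcross i x' y' e f
      have hx'i : x' i = x i := by simp [hx', hiS]
      have hy'i : y' i = y i := by simp [hy', hiS]
      have hre : (fun j : {j : Fin K // j ≠ i} => e j) = (fun j : {j : Fin K // j ≠ i} => e j) := rfl
      have hxm : extendIdx i (e i) (fun j : {j : Fin K // j ≠ i} => x' j) =
          (fun j => if j ∈ insert i S then e j else x j) := by
        funext j
        by_cases h : j = i
        · subst h; rw [extendIdx_self]; simp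
        · rw [extendIdx_ne _ _ _ _ h]
          simp only [hx', Finset.mem_insert]
          by_cases hj : j ∈ S <;> simp [hj, h]
      have hym : extendIdx i (f i) (fun j : {j : Fin K // j ≠ i} => y' j) =
          (fun j => if j ∈ insert i S then f j else y j) := by
        funext j
        by_cases h : j = i
        · subst h; rw [extendIdx_self]; simp
        · rw [extendIdx_ne _ _ _ _ h]
          simp only [hy', Finset.mem_insert]
          by_cases hj : j ∈ S <;> simp [hj, h]
      rw [hx'i, hy'i, hxm, hym] at hstep
      have hNi : A (extendIdx i (x i) fun j => e j) (extendIdx i (y i) fun j => f j) =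
          N i (x i) (y i) := rfl
      rw [hNi] at hstep
      calc A x y * c ^ (insert i S).card
          = (A x y * c ^ S.card) * c := by
            rw [Finset.card_insert_of_notMem hiS, pow_succ]; ring
        _ = (∏ j ∈ S, N j (x j) (y j)) * (A x' y' * c) := by rw [ih]; ring
        _ = (∏ j ∈ S, N j (x j) (y j)) * (N i (x i) (y i) *
              A (fun j => if j ∈ insert i S then e j else x j)
                (fun j => if j ∈ insert i S then f j else y j)) := by rw [← hstep]
        _ = (∏ j ∈ insert i S, N j (x j) (y j)) *
              A (fun j => if j ∈ insert i S then e j else x j)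
                (fun j => if j ∈ insert i S then f j else y j) := by
            rw [Finset.prod_insert hiS]; ring
  set c₀ : ℂ := c⁻¹ ^ (K - 1) with hc₀
  have hc₀ne : c₀ ≠ 0 := pow_ne_zero _ (inv_ne_zero hef)
  have hmain : ∀ x y, A x y = c₀ * ∏ i, N i (x i) (y i) := by
    intro x y
    have h1 := hclaim x y Finset.univ
    simp only [Finset.mem_univ, if_true, Finset.card_univ, Fintype.card_fin] at h1
    have hpow : c ^ K = c ^ (K - 1) * c := by rw [← pow_succ]; congr 1; omega
    rw [hpow, ← mul_assoc] at h1
    have h2 : A x y * c ^ (K - 1) = ∏ i, N i (x i) (y i) := mul_right_cancel₀ hef h1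
    rw [hc₀, ← h2,
      show c⁻¹ ^ (K - 1) * (A x y * c ^ (K - 1)) = A x y * (c⁻¹ * c) ^ (K - 1) by
        rw [mul_pow]; ring,
      inv_mul_cancel₀ hef, one_pow, mul_one]
  -- each N i is invertible
  have hNunit : ∀ i, IsUnit (N i) := by
    intro i
    rw [Matrix.isUnit_iff_isUnit_det, isUnit_iff_ne_zero]
    intro hdet0
    obtain ⟨w, hw0, hw⟩ := Matrix.exists_mulVec_eq_zero_iff.2 hdet0
    set W : (∀ i, Fin (n i)) → ℂ := fun y =>
      if (∀ j, j ≠ i → y j = f j) then w (y i) else 0 with hW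
    have hWne : W ≠ 0 := by
      obtain ⟨q₀, hq₀⟩ := Function.ne_iff.1 hw0
      intro h0
      apply hq₀
      have := congrFun h0 (extendIdx i q₀ fun j => f j)
      simp only [hW, Pi.zero_apply] at this
      rw [if_pos, extendIdx_self] at this
      · exact this
      · intro j hj; exact extendIdx_ne _ _ _ _ hj
    have hmv : A.mulVec W = 0 := by
      funext x
      have hsum : ∀ y, A x y * W y =
          if (∀ j, j ≠ i → y j = f j) then A x y * w (y i) else 0 := by
        intro y
        by_cases h : ∀ j, j ≠ i → y j = f j <;> simp [hW, h]
      calc A.mulVec W x = ∑ y, A x y * W y := rfl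
        _ = ∑ y ∈ Finset.univ.filter (fun y => ∀ j, j ≠ i → y j = f j), A x y * w (y i) := by
            rw [Finset.sum_filter]; exact Finset.sum_congr rfl fun y _ => hsum y
        _ = ∑ q : Fin (n i), A x (extendIdx i q fun j => f j) * w q := by
            refine Finset.sum_nbij' (fun y => y i) (fun q => extendIdx i q fun j => f j)
              ?_ ?_ ?_ ?_ ?_
            · intro y _; exact Finset.mem_univ _
            · intro q _
              simp only [Finset.mem_filter, Finset.mem_univ, true_and]
              intro j hj; exact extendIdx_ne _ _ _ _ hj
            · intro y hy
              simp only [Finset.mem_filter, Finset.mem_univ, true_and] at hy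
              show extendIdx i (y i) (fun j => f j) = y
              funext j
              by_cases h : j = i
              · subst h; exact extendIdx_self _ _ _
              · rw [extendIdx_ne _ _ _ _ h]; exact (hy j h).symm
            · intro q _; exact extendIdx_self _ _ _
            · intro y hy
              simp only [Finset.mem_filter, Finset.mem_univ, true_and] at hy
              congr 2
              funext j
              by_cases h : j = i
              · subst h; exact (extendIdx_self _ _ _).symm
              · rw [extendIdx_ne _ _ _ _ h]; exact hy j h
        _ = 0 := by
            have hAval : ∀ q : Fin (n i),
                A x (extendIdx i q fun j => f j) =
                c₀ * (N i (x i) q * ∏ j ∈ Finset.univ.erase i, N j (x j) (f j)) := by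
              intro q
              rw [hmain]
              congr 1
              rw [← Finset.mul_prod_erase Finset.univ _ (Finset.mem_univ i)]
              congr 1
              · congr 1; exact extendIdx_self _ _ _
              · refine Finset.prod_congr rfl fun j hj => ?_
                have hji : j ≠ i := (Finset.mem_erase.1 hj).1
                congr 1
                exact extendIdx_ne _ _ _ _ hji
            simp only [hAval]
            have hz : ∑ q, N i (x i) q * w q = 0 := by
              have := congrFun hw (x i)
              simpa [Matrix.mulVec, dotProduct] using this
            calc ∑ q : Fin (n i),
                  c₀ * (N i (x i) q * ∏ j ∈ Finset.univ.erase i, N j (x j) (f j)) * w q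
                = (c₀ * ∏ j ∈ Finset.univ.erase i, N j (x j) (f j)) *
                    ∑ q, N i (x i) q * w q := by
                  rw [Finset.mul_sum]; exact Finset.sum_congr rfl fun q _ => by ring
              _ = 0 := by rw [hz, mul_zero]
    exact hdet (Matrix.exists_mulVec_eq_zero_iff.1 ⟨W, hWne, hmv⟩)
  set z : Fin K := ⟨0, hK⟩ with hz
  refine ⟨fun i => if i = z then c₀ • N i else N i, ?_, ?_⟩
  · intro i
    show IsUnit (if i = z then c₀ • N i else N i)
    by_cases h : i = z
    · subst h
      rw [if_pos rfl, Matrix.isUnit_iff_isUnit_det, Matrix.det_smul, isUnit_iff_ne_zero]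
      exact mul_ne_zero (pow_ne_zero _ hc₀ne)
        (isUnit_iff_ne_zero.1 ((Matrix.isUnit_iff_isUnit_det _).1 (hNunit z)))
    · simpa [h] using hNunit i
  · intro x y
    rw [hmain x y,
      ← Finset.mul_prod_erase Finset.univ (fun i => N i (x i) (y i)) (Finset.mem_univ z),
      ← Finset.mul_prod_erase Finset.univ
        (fun i => (if i = z then c₀ • N i else N i) (x i) (y i)) (Finset.mem_univ z)]
    have h1 : (if z = z then c₀ • N z else N z) (x z) (y z) = c₀ * N z (x z) (y z) := by
      simp
    have h2 : ∏ i ∈ Finset.univ.erase z, (if i = z then c₀ • N i else N i) (x i) (y i)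
        = ∏ i ∈ Finset.univ.erase z, N i (x i) (y i) := by
      refine Finset.prod_congr rfl fun i hi => ?_
      rw [if_neg (Finset.mem_erase.1 hi).1]
    rw [h1, h2]; ring
end

section
/- Let N₁, N₂, N₃ ≥ 1 and let A be an invertible matrix indexed by (Fin N₁ × Fin N₂ × Fin N₃) × (Fin N₁ × Fin N₂ × Fin N₃) over ℂ. Suppose there exist an invertible matrix a₁ : Matrix (Fin N₁) (Fin N₁) ℂ and an invertible matrix a₂₃ indexed by (Fin N₂ × Fin N₃) × (Fin N₂ × Fin N₃) with A (x₁,x₂,x₃) (y₁,y₂,y₃) = a₁ x₁ y₁ * a₂₃ (x₂,x₃) (y₂,y₃), and also an invertible matrix a₂ : Matrix (Fin N₂) (Fin N₂) ℂ and an invertible matrix a₁₃ indexed by (Fin N₁ × Fin N₃) × (Fin N₁ × Fin N₃) with A (x₁,x₂,x₃) (y₁,y₂,y₃) = a₂ x₂ y₂ * a₁₃ (x₁,x₃) (y₁,y₃). Then there exists an invertible matrix a₃' : Matrix (Fin N₃) (Fin N₃) ℂ such that a₂₃ (x₂,x₃) (y₂,y₃) = a₂ x₂ y₂ * a₃' x₃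 y₃ for all x₂,x₃,y₂,y₃; in particular A factorizes as a tensor product of invertible local matrices on all three factors. -/
/-- If an invertible matrix `A` on a tripartite index factorizes both as
`a₁ ⊗ a₂₃` and as `a₂ ⊗ a₁₃` (with all factors invertible), then `a₂₃` itself
factorizes as `a₂ ⊗ a₃'` for some invertible `a₃'`; in particular `A` is a
tensor product of invertible local matrices on all three factors. -/
theorem tripartite_factorization (N₁ N₂ N₃ : ℕ) (h₁ : 1 ≤ N₁) (h₂ : 1 ≤ N₂) (h₃ : 1 ≤ N₃)
    (A : Matrix (Fin N₁ × Fin N₂ × Fin N₃) (Fin N₁ × Fin N₂ × Fin N₃) ℂ) (hA : IsUnit A)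
    (a₁ : Matrix (Fin N₁) (Fin N₁) ℂ) (ha₁ : IsUnit a₁)
    (a₂₃ : Matrix (Fin N₂ × Fin N₃) (Fin N₂ × Fin N₃) ℂ) (ha₂₃ : IsUnit a₂₃)
    (hA1 : ∀ x₁ x₂ x₃ y₁ y₂ y₃,
      A (x₁, x₂, x₃) (y₁, y₂, y₃) = a₁ x₁ y₁ * a₂₃ (x₂, x₃) (y₂, y₃))
    (a₂ : Matrix (Fin N₂) (Fin N₂) ℂ) (ha₂ : IsUnit a₂)
    (a₁₃ : Matrix (Fin N₁ × Fin N₃) (Fin N₁ × Fin N₃) ℂ) (ha₁₃ : IsUnit a₁₃)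
    (hA2 : ∀ x₁ x₂ x₃ y₁ y₂ y₃,
      A (x₁, x₂, x₃) (y₁, y₂, y₃) = a₂ x₂ y₂ * a₁₃ (x₁, x₃) (y₁, y₃)) :
    ∃ a₃' : Matrix (Fin N₃) (Fin N₃) ℂ, IsUnit a₃' ∧
      (∀ x₂ x₃ y₂ y₃, a₂₃ (x₂, x₃) (y₂, y₃) = a₂ x₂ y₂ * a₃' x₃ y₃) ∧
      (∀ x₁ x₂ x₃ y₁ y₂ y₃,
        A (x₁, x₂, x₃) (y₁, y₂, y₃) = a₁ x₁ y₁ * a₂ x₂ y₂ * a₃' x₃ y₃) := by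
  have hN₂ : Nonempty (Fin N₂) := ⟨⟨0, h₂⟩⟩
  haveI hN₁ : Nonempty (Fin N₁) := ⟨⟨0, h₁⟩⟩
  -- find a nonzero entry of a₁
  obtain ⟨u, v, huv⟩ : ∃ u v, a₁ u v ≠ 0 := by
    by_contra h
    push_neg at h
    have hz : a₁ = 0 := by ext i j; exact h i j
    have hd := (Matrix.isUnit_iff_isUnit_det _).mp ha₁
    rw [hz, Matrix.det_zero] at hd
    simp at hd
  set c := a₁ u v with hc
  set a₃' : Matrix (Fin N₃) (Fin N₃) ℂ :=
    fun x₃ y₃ => a₁₃ (u, x₃) (v, y₃) / c with ha₃'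
  have hfac : ∀ x₂ x₃ y₂ y₃, a₂₃ (x₂, x₃) (y₂, y₃) = a₂ x₂ y₂ * a₃' x₃ y₃ := by
    intro x₂ x₃ y₂ y₃
    have key : c * a₂₃ (x₂, x₃) (y₂, y₃) = a₂ x₂ y₂ * a₁₃ (u, x₃) (v, y₃) := by
      rw [hc, ← hA1 u x₂ x₃ v y₂ y₃, hA2]
    have h4 : a₂₃ (x₂, x₃) (y₂, y₃) = (a₂ x₂ y₂ * a₁₃ (u, x₃) (v, y₃)) / c :=
      eq_div_of_mul_eq huv (by rw [mul_comm]; exact key)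
    rw [h4, ha₃', mul_div_assoc]
  refine ⟨a₃', ?_, hfac, ?_⟩
  · have hkron : a₂₃ = Matrix.kroneckerMap (· * ·) a₂ a₃' := by
      ext ⟨x₂, x₃⟩ ⟨y₂, y₃⟩
      exact hfac x₂ x₃ y₂ y₃
    have hdet : a₂₃.det = a₂.det ^ Fintype.card (Fin N₃) *
        a₃'.det ^ Fintype.card (Fin N₂) := by
      rw [hkron]; exact Matrix.det_kronecker a₂ a₃'
    have hdu : IsUnit a₂₃.det := (Matrix.isUnit_iff_isUnit_det _).mp ha₂₃
    rw [hdet] at hdu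
    rw [Matrix.isUnit_iff_isUnit_det]
    simp only [isUnit_iff_ne_zero, mul_ne_zero_iff, pow_ne_zero_iff,
      Fintype.card_fin] at hdu ⊢
    exact (pow_ne_zero_iff (Nat.one_le_iff_ne_zero.mp h₂)).mp hdu.2
  · intro x₁ x₂ x₃ y₁ y₂ y₃
    rw [hA1 x₁ x₂ x₃ y₁ y₂ y₃, hfac x₂ x₃ y₂ y₃, mul_assoc]
end

section
/- Let K ≥ 2, n : Fin K → ℕ with all n i ≥ 1, and t = ⌊K/2⌋. Let φ, ψ : (Π i : Fin K, Fin (n i)) → ℂ be coefficient tensors of K-partite pure states. Suppose there exist unitary matrices X₁, X₂ on the row index set Π_{i < t} Fin (n i), unitary matrices Y₁, Y₂ on the column index set Π_{t ≤ i < K} Fin (n i), and invertible diagonal matrices B₁, B₂ (on the row and column index sets respectively) such that M(φ) = X₁ B₁ X₂† · M(ψ) · Y₂† B₂ Y₁, such that for every coordinate i < t the realignment of X₁B₁X₂† with respect to the bipartition {i} versus the remaining coordinates has rank 1, and for every coordinate j with t ≤ j < K the realignment of Y₂†B₂Y₁ with respect to the bipartition {j} versus the remaining coordinates has rank 1. Then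 φ and ψ are SLOCC equivalent. -/
open Matrix

/-- The coefficient matrix of a `K`-partite pure-state coefficient tensor `ψ`,
with rows indexed by the tuples of the first `t` local indices and columns
indexed by the tuples of the remaining local indices. -/
def coeffMatrix {K : ℕ} {n : Fin K → ℕ} (t : ℕ) (ψ : (∀ i, Fin (n i)) → ℂ) :
    Matrix (∀ i : {i : Fin K // (i : ℕ) < t}, Fin (n i))
           (∀ i : {i : Fin K // ¬ (i : ℕ) < t}, Fin (n i)) ℂ :=
  Matrix.of fun r c => ψ fun i => if h : (i : ℕ) < t then r ⟨i, h⟩ else c ⟨i, h⟩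

/-- Entries of a rank-one matrix satisfy the vanishing of all `2 × 2` minors. -/
lemma minor_of_rank_one {m n : Type*} [Fintype m] [Fintype n] [DecidableEq n]
    (A : Matrix m n ℂ) (h : A.rank = 1) (p p' : m) (q q' : n) :
    A p q * A p' q' = A p q' * A p' q := by
  rw [Matrix.rank] at h
  obtain ⟨v, -, hv⟩ := (finrank_eq_one_iff' (K := ℂ)
    (V := LinearMap.range A.mulVecLin)).mp h
  have hcol : ∀ q : n, ∃ c : ℂ, ∀ p : m, A p q = c * (v : m → ℂ) p := by
    intro q
    obtain ⟨c, hc⟩ := hv ⟨A *ᵥ Pi.single q 1, LinearMap.mem_range_self _ _⟩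
    refine ⟨c, fun p => ?_⟩
    have h2 := congrArg (fun w : LinearMap.range A.mulVecLin => (w : m → ℂ) p) hc
    simpa [Matrix.mulVec_single] using h2.symm
  obtain ⟨c, hc⟩ := hcol q
  obtain ⟨c', hc'⟩ := hcol q'
  rw [hc, hc', hc, hc']; ring

lemma extendIdx_eq_update {ι : Type*} [DecidableEq ι] {m : ι → ℕ} (i : ι)
    (a : Fin (m i)) (x : ∀ j, Fin (m j)) :
    extendIdx i a (fun j => x j.1) = Function.update x i a := by
  funext j
  unfold extendIdx
  by_cases h : j = i
  · subst h; simp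
  · simp [h, Function.update_of_ne h]

/-- The `2 × 2` minor identity obtained from a rank-one realignment. -/
lemma minor_realign {ι : Type*} [Fintype ι] [DecidableEq ι] {m : ι → ℕ}
    (A : Matrix (∀ i, Fin (m i)) (∀ i, Fin (m i)) ℂ) (i : ι)
    (h : (realignAt A i).rank = 1) (x y x' y' : ∀ j, Fin (m j)) :
    A x y * A x' y' =
      A (Function.update x' i (x i)) (Function.update y' i (y i)) *
        A (Function.update x i (x' i)) (Function.update y i (y' i)) := by
  have key := minor_of_rank_one (realignAt A i) h (x i, y i) (x' i, y' i)
    (fun j => x j.1, fun j => y j.1) (fun j => x' j.1, fun j => y' j.1)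
  simpa [realignAt, extendIdx_eq_update, Function.update_eq_self] using key

/-- An invertible matrix on a product index set all of whose single-coordinate
realignments have rank one factorizes as a tensor product of invertible local
matrices. -/
lemma factorize {ι : Type*} [Fintype ι] [DecidableEq ι] [Nonempty ι] {m : ι → ℕ}
    (hm : ∀ i, 1 ≤ m i)
    (A : Matrix (∀ i, Fin (m i)) (∀ i, Fin (m i)) ℂ)
    (hA : ∀ i, (realignAt A i).rank = 1) (hU : IsUnit A) :
    ∃ C : ∀ i, Matrix (Fin (m i)) (Fin (m i)) ℂ,
      (∀ i, IsUnit (C i)) ∧ ∀ x y, A x y = ∏ i, C i (x i) (y i) := by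
  classical
  haveI : ∀ i, Nonempty (Fin (m i)) := fun i => ⟨⟨0, hm i⟩⟩
  haveI : Nonempty (∀ i, Fin (m i)) := ⟨fun i => ⟨0, hm i⟩⟩
  have hdet : A.det ≠ 0 := by
    intro h0
    rw [Matrix.isUnit_iff_isUnit_det, h0] at hU
    simp at hU
  obtain ⟨x₀, y₀, h₀⟩ : ∃ x₀ y₀, A x₀ y₀ ≠ 0 := by
    by_contra hc
    push_neg at hc
    apply hdet
    have : A = 0 := by ext x y; exact hc x y
    rw [this, Matrix.det_zero]
  set A₀ : ℂ := A x₀ y₀ with hA₀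
  have key : ∀ s : Finset ι, ∀ x y : ∀ i, Fin (m i),
      (∀ j, j ∉ s → x j = x₀ j ∧ y j = y₀ j) →
      A x y * A₀ ^ s.card =
        A₀ * ∏ i ∈ s, A (Function.update x₀ i (x i)) (Function.update y₀ i (y i)) := by
    intro s
    induction s using Finset.induction_on with
    | empty =>
      intro x y hxy
      have hx : x = x₀ := funext fun j => (hxy j (by simp)).1
      have hy : y = y₀ := funext fun j => (hxy j (by simp)).2
      simp [hx, hy, hA₀]
    | insert _ _ hi ih =>
      rename_i i s'
      intro x y hxy
      have hmin := minor_realign A i (hA i) x y x₀ y₀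
      have hagree : ∀ j, j ∉ s' →
          Function.update x i (x₀ i) j = x₀ j ∧ Function.update y i (y₀ i) j = y₀ j := by
        intro j hj
        by_cases hji : j = i
        · subst hji; simp
        · rw [Function.update_of_ne hji, Function.update_of_ne hji]
          exact hxy j (by simp [hji, hj])
      have ihx := ih (Function.update x i (x₀ i)) (Function.update y i (y₀ i)) hagree
      rw [Finset.card_insert_of_notMem hi, Finset.prod_insert hi, pow_succ]
      have hprod : ∏ j ∈ s', A (Function.update x₀ j (Function.update x i (x₀ i) j))
            (Function.update y₀ j (Function.update y i (y₀ i) j))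
          = ∏ j ∈ s', A (Function.update x₀ j (x j)) (Function.update y₀ j (y j)) := by
        refine Finset.prod_congr rfl fun j hj => ?_
        have hji : j ≠ i := fun h => hi (h ▸ hj)
        rw [Function.update_of_ne hji, Function.update_of_ne hji]
      calc A x y * (A₀ ^ s'.card * A₀)
          = (A x y * A₀) * A₀ ^ s'.card := by ring
        _ = (A (Function.update x₀ i (x i)) (Function.update y₀ i (y i)) *
              A (Function.update x i (x₀ i)) (Function.update y i (y₀ i))) * A₀ ^ s'.card := by
            rw [hmin]
        _ = A (Function.update x₀ i (x i)) (Function.update y₀ i (y i)) *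
              (A (Function.update x i (x₀ i)) (Function.update y i (y₀ i)) * A₀ ^ s'.card) := by
            ring
        _ = A (Function.update x₀ i (x i)) (Function.update y₀ i (y i)) *
              (A₀ * ∏ j ∈ s', A (Function.update x₀ j (x j)) (Function.update y₀ j (y j))) := by
            rw [ihx, hprod]
        _ = _ := by ring
  set N := Fintype.card ι with hN
  have hNpos : 1 ≤ N := Fintype.card_pos
  obtain ⟨i₀⟩ := ‹Nonempty ι›
  set C : ∀ i, Matrix (Fin (m i)) (Fin (m i)) ℂ := fun i =>
    Matrix.of fun a b =>
      A (Function.update x₀ i a) (Function.update y₀ i b) * (if i = i₀ then 1 else A₀⁻¹)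
    with hC
  have hfac : ∀ x y, A x y = ∏ i, C i (x i) (y i) := by
    intro x y
    have hk := key Finset.univ x y (by simp)
    have hDsplit : ∀ g : ι → ℂ, ∏ i, g i = g i₀ * ∏ i ∈ Finset.univ.erase i₀, g i :=
      fun g => (Finset.mul_prod_erase Finset.univ g (Finset.mem_univ i₀)).symm
    have hCval : ∏ i, C i (x i) (y i) =
        (∏ i, A (Function.update x₀ i (x i)) (Function.update y₀ i (y i))) *
          A₀⁻¹ ^ (N - 1) := by
      rw [hC]
      simp only [Matrix.of_apply]
      rw [Finset.prod_mul_distrib]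
      congr 1
      rw [hDsplit (fun i => if i = i₀ then (1:ℂ) else A₀⁻¹)]
      rw [if_pos rfl, one_mul]
      rw [Finset.prod_congr rfl (fun j hj => if_neg (Finset.mem_erase.mp hj).1),
        Finset.prod_const, Finset.card_erase_of_mem (Finset.mem_univ i₀),
        Finset.card_univ]
    rw [hCval]
    have hcard : Finset.univ.card = N := Finset.card_univ
    rw [hcard] at hk
    have hNeq : N = (N - 1) + 1 := (Nat.succ_pred_eq_of_pos hNpos).symm
    have hPow : A₀ ^ N ≠ 0 := pow_ne_zero _ h₀
    have hne1 : A₀ ^ (N - 1) ≠ 0 := pow_ne_zero _ h₀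
    have hstep : A x y =
        (A₀ * ∏ i, A (Function.update x₀ i (x i)) (Function.update y₀ i (y i))) / A₀ ^ N := by
      rw [eq_div_iff hPow]; exact hk
    rw [hstep, inv_pow, div_eq_iff hPow, hNeq, pow_succ]
    field_simp
    ring_nf
    simp
  refine ⟨C, ?_, hfac⟩
  intro j
  by_contra hj
  rw [Matrix.isUnit_iff_isUnit_det, isUnit_iff_ne_zero, not_not] at hj
  obtain ⟨v, hv, hv0⟩ := Matrix.exists_mulVec_eq_zero_iff.mpr hj
  set e : ∀ i, Fin (m i) := fun i => ⟨0, hm i⟩ with he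
  set w : (∀ i, Fin (m i)) → ℂ := fun y =>
    v (y j) * ∏ i ∈ Finset.univ.erase j, (if y i = e i then (1:ℂ) else 0) with hw
  have hwima : ∀ b, w (Function.update e j b) = v b := by
    intro b
    rw [hw]
    simp only
    rw [Function.update_self]
    rw [Finset.prod_congr rfl (fun i hi => by
      rw [Function.update_of_ne (Finset.mem_erase.mp hi).1, if_pos rfl])]
    simp
  have hwne : w ≠ 0 := by
    obtain ⟨b, hb⟩ := Function.ne_iff.mp hv
    intro h0
    exact hb (by simpa [hwima b] using congrFun h0 (Function.update e j b))
  have hAw : A *ᵥ w = 0 := by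
    funext x
    rw [Matrix.mulVec]
    show (fun y => A x y) ⬝ᵥ w = 0
    rw [dotProduct]
    set T : Finset (∀ i, Fin (m i)) :=
      Finset.image (fun b : Fin (m j) => Function.update e j b) Finset.univ with hT
    have hmemT : ∀ y, y ∈ T ↔ ∀ i, i ≠ j → y i = e i := by
      intro y
      constructor
      · rintro hy i hij
        obtain ⟨b, -, rfl⟩ := Finset.mem_image.mp hy
        rw [Function.update_of_ne hij]
      · intro hy
        refine Finset.mem_image.mpr ⟨y j, Finset.mem_univ _, ?_⟩
        funext i
        by_cases hij : i = j
        · subst hij; simp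
        · rw [Function.update_of_ne hij]; exact (hy i hij).symm
    have hzero : ∀ y ∈ Finset.univ, y ∉ T → A x y * w y = 0 := by
      intro y _ hy
      have : ∃ i, i ≠ j ∧ y i ≠ e i := by
        by_contra hcc
        push_neg at hcc
        exact hy ((hmemT y).mpr hcc)
      obtain ⟨i, hij, hie⟩ := this
      have hp0 : (∏ i' ∈ Finset.univ.erase j, if y i' = e i' then (1:ℂ) else 0) = 0 :=
        Finset.prod_eq_zero (Finset.mem_erase.mpr ⟨hij, Finset.mem_univ i⟩) (by rw [if_neg hie])
      have : w y = 0 := mul_eq_zero_of_right _ hp0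
      rw [this, mul_zero]
    rw [← Finset.sum_subset (Finset.subset_univ T) hzero]
    have hinj : Function.Injective (fun b : Fin (m j) => Function.update e j b) := by
      intro b b' hbb'
      have := congrFun hbb' j
      simpa using this
    rw [hT, Finset.sum_image (fun b _ b' _ h => hinj h)]
    have hterm : ∀ b : Fin (m j), A x (Function.update e j b) * w (Function.update e j b) =
        (∏ i ∈ Finset.univ.erase j, C i (x i) (e i)) * (C j (x j) b * v b) := by
      intro b
      rw [hwima, hfac]
      rw [← Finset.mul_prod_erase Finset.univ _ (Finset.mem_univ j)]
      rw [Function.update_self]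
      rw [Finset.prod_congr rfl (fun i hi => by
        rw [Function.update_of_ne (Finset.mem_erase.mp hi).1])]
      ring
    rw [Finset.sum_congr rfl (fun b _ => hterm b), ← Finset.mul_sum]
    have : ∑ b, C j (x j) b * v b = (C j *ᵥ v) (x j) := by
      rw [Matrix.mulVec, dotProduct]
    rw [this, hv0]
    simp
  exact hdet (Matrix.exists_mulVec_eq_zero_iff.mp ⟨w, hwne, hAw⟩)

/-- If the coefficient matrices of two `K`-partite pure-state coefficient tensors
are related as `M(φ) = X₁B₁X₂† M(ψ) Y₂†B₂Y₁` with `X₁, X₂, Y₁, Y₂` unitary and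
`B₁, B₂` invertible diagonal, and all single-coordinate realignments of
`X₁B₁X₂†` and of `Y₂†B₂Y₁` have rank 1, then `φ` and `ψ` are SLOCC equivalent. -/
theorem slocc_pure_sufficient (K : ℕ) (hK : 2 ≤ K) (n : Fin K → ℕ)
    (hn : ∀ i, 1 ≤ n i) (φ ψ : (∀ i, Fin (n i)) → ℂ)
    (X₁ X₂ : Matrix (∀ i : {i : Fin K // (i : ℕ) < K / 2}, Fin (n i))
                    (∀ i : {i : Fin K // (i : ℕ) < K / 2}, Fin (n i)) ℂ)
    (Y₁ Y₂ : Matrix (∀ i : {i : Fin K // ¬ (i : ℕ) < K / 2}, Fin (n i))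
                    (∀ i : {i : Fin K // ¬ (i : ℕ) < K / 2}, Fin (n i)) ℂ)
    (b₁ : (∀ i : {i : Fin K // (i : ℕ) < K / 2}, Fin (n i)) → ℂ)
    (b₂ : (∀ i : {i : Fin K // ¬ (i : ℕ) < K / 2}, Fin (n i)) → ℂ)
    (hX₁ : X₁ ∈ Matrix.unitaryGroup (∀ i : {i : Fin K // (i : ℕ) < K / 2}, Fin (n i)) ℂ)
    (hX₂ : X₂ ∈ Matrix.unitaryGroup (∀ i : {i : Fin K // (i : ℕ) < K / 2}, Fin (n i)) ℂ)
    (hY₁ : Y₁ ∈ Matrix.unitaryGroup (∀ i : {i : Fin K // ¬ (i : ℕ) < K / 2}, Fin (n i)) ℂ)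
    (hY₂ : Y₂ ∈ Matrix.unitaryGroup (∀ i : {i : Fin K // ¬ (i : ℕ) < K / 2}, Fin (n i)) ℂ)
    (hb₁ : ∀ r, b₁ r ≠ 0) (hb₂ : ∀ c, b₂ c ≠ 0)
    (hM : coeffMatrix (K / 2) φ =
      X₁ * Matrix.diagonal b₁ * X₂ᴴ * coeffMatrix (K / 2) ψ *
        Y₂ᴴ * Matrix.diagonal b₂ * Y₁)
    (hrow : ∀ i : {i : Fin K // (i : ℕ) < K / 2},
      (realignAt (X₁ * Matrix.diagonal b₁ * X₂ᴴ) i).rank = 1)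
    (hcol : ∀ j : {j : Fin K // ¬ (j : ℕ) < K / 2},
      (realignAt (Y₂ᴴ * Matrix.diagonal b₂ * Y₁) j).rank = 1) :
    ∃ C : ∀ i, Matrix (Fin (n i)) (Fin (n i)) ℂ,
      (∀ i, IsUnit (C i)) ∧ ∀ x, φ x = ∑ y, (∏ i, C i (x i) (y i)) * ψ y := by
  classical
  haveI : Nonempty {i : Fin K // (i : ℕ) < K / 2} :=
    ⟨⟨⟨0, by omega⟩, by show (0 : ℕ) < K / 2; omega⟩⟩
  haveI : Nonempty {i : Fin K // ¬ (i : ℕ) < K / 2} :=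
    ⟨⟨⟨K / 2, by omega⟩, by show ¬ K / 2 < K / 2; omega⟩⟩
  have hUX₁ : IsUnit X₁ :=
    ⟨⟨X₁, star X₁, (Unitary.mem_iff.mp hX₁).2, (Unitary.mem_iff.mp hX₁).1⟩, rfl⟩
  have hUX₂ : IsUnit X₂ᴴ :=
    IsUnit.star ⟨⟨X₂, star X₂, (Unitary.mem_iff.mp hX₂).2, (Unitary.mem_iff.mp hX₂).1⟩, rfl⟩
  have hUY₁ : IsUnit Y₁ :=
    ⟨⟨Y₁, star Y₁, (Unitary.mem_iff.mp hY₁).2, (Unitary.mem_iff.mp hY₁).1⟩, rfl⟩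
  have hUY₂ : IsUnit Y₂ᴴ :=
    IsUnit.star ⟨⟨Y₂, star Y₂, (Unitary.mem_iff.mp hY₂).2, (Unitary.mem_iff.mp hY₂).1⟩, rfl⟩
  set Lm := X₁ * Matrix.diagonal b₁ * X₂ᴴ with hLm
  set Rm := Y₂ᴴ * Matrix.diagonal b₂ * Y₁ with hRm
  have hUD₁ : IsUnit (Matrix.diagonal b₁) := by
    rw [Matrix.isUnit_iff_isUnit_det, Matrix.det_diagonal, isUnit_iff_ne_zero]
    exact Finset.prod_ne_zero_iff.mpr fun r _ => hb₁ r
  have hUD₂ : IsUnit (Matrix.diagonal b₂) := by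
    rw [Matrix.isUnit_iff_isUnit_det, Matrix.det_diagonal, isUnit_iff_ne_zero]
    exact Finset.prod_ne_zero_iff.mpr fun r _ => hb₂ r
  have hUL : IsUnit Lm := by rw [hLm]; exact (hUX₁.mul hUD₁).mul hUX₂
  have hUR : IsUnit Rm := by rw [hRm]; exact (hUY₂.mul hUD₂).mul hUY₁
  obtain ⟨Cr, hCrU, hCr⟩ := factorize (m := fun i : {i : Fin K // (i : ℕ) < K / 2} => n i)
    (fun i => hn i) Lm hrow hUL
  obtain ⟨Cc, hCcU, hCc⟩ := factorize (m := fun i : {i : Fin K // ¬ (i : ℕ) < K / 2} => n i)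
    (fun i => hn i) Rm hcol hUR
  refine ⟨fun i => if h : (i : ℕ) < K / 2 then Cr ⟨i, h⟩ else (Cc ⟨i, h⟩)ᵀ, ?_, ?_⟩
  · intro i
    show IsUnit ((if h : (i : ℕ) < K / 2 then Cr ⟨i, h⟩ else (Cc ⟨i, h⟩)ᵀ : Matrix (Fin (n i)) (Fin (n i)) ℂ))
    by_cases h : (i : ℕ) < K / 2
    · rw [dif_pos h]; exact hCrU ⟨i, h⟩
    · rw [dif_neg h]
      rw [Matrix.isUnit_iff_isUnit_det, Matrix.det_transpose, ← Matrix.isUnit_iff_isUnit_det]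
      exact hCcU ⟨i, h⟩
  · intro x
    set e : (∀ i : Fin K, Fin (n i)) ≃ _ :=
      Equiv.piEquivPiSubtypeProd (fun i : Fin K => (i : ℕ) < K / 2) (fun i => Fin (n i))
      with hedef
    have hφ : φ x = coeffMatrix (K / 2) φ (fun i => x i) (fun i => x i) := by
      show φ x = φ (fun i => if h : (i : ℕ) < K / 2 then x i else x i)
      congr 1
      funext i
      by_cases h : (i : ℕ) < K / 2
      · rw [dif_pos h]
      · rw [dif_neg h]
    have hMφ : coeffMatrix (K / 2) φ = Lm * (coeffMatrix (K / 2) ψ * Rm) := by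
      rw [hM, hRm, hLm]; simp only [Matrix.mul_assoc]
    rw [hφ, hMφ, Matrix.mul_apply]
    rw [← Equiv.sum_comp e.symm (fun y =>
      (∏ i : Fin K, (if h : (i : ℕ) < K / 2 then Cr ⟨i, h⟩ else (Cc ⟨i, h⟩)ᵀ) (x i) (y i)) * ψ y)]
    rw [Fintype.sum_prod_type]
    refine Finset.sum_congr rfl fun r' _ => ?_
    rw [Matrix.mul_apply, Finset.mul_sum]
    refine Finset.sum_congr rfl fun c' _ => ?_
    have hψ : ψ (e.symm (r', c')) = coeffMatrix (K / 2) ψ r' c' := rfl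
    have hLfac : (∏ i : {i : Fin K // (i : ℕ) < K / 2},
        (if h : ((i : Fin K) : ℕ) < K / 2 then Cr ⟨i, h⟩ else (Cc ⟨i, h⟩)ᵀ)
          (x i) (e.symm (r', c') i)) =
        Lm (fun i => x i) r' := by
      rw [hCr]
      refine Finset.prod_congr rfl fun i _ => ?_
      rw [dif_pos i.2]
      show Cr ⟨↑i, i.2⟩ (x i) (e.symm (r', c') i) = Cr i (x i) (r' i)
      congr 1
      show (if h : ((i : Fin K) : ℕ) < K / 2 then r' ⟨i, h⟩ else c' ⟨i, h⟩) = r' i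
      rw [dif_pos i.2]
    have hRfac : (∏ i : {i : Fin K // ¬ ((i : Fin K) : ℕ) < K / 2},
        (if h : ((i : Fin K) : ℕ) < K / 2 then Cr ⟨i, h⟩ else (Cc ⟨i, h⟩)ᵀ)
          (x i) (e.symm (r', c') i)) =
        Rm c' (fun i => x i) := by
      rw [hCc]
      refine Finset.prod_congr rfl fun i _ => ?_
      rw [dif_neg i.2]
      rw [Matrix.transpose_apply]
      show Cc ⟨↑i, i.2⟩ (e.symm (r', c') i) (x i) = Cc i (c' i) (x i)
      congr 1
      show (if h : ((i : Fin K) : ℕ) < K / 2 then r' ⟨i, h⟩ else c' ⟨i, h⟩) = c' i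
      rw [dif_neg i.2]
    rw [← Fintype.prod_subtype_mul_prod_subtype (fun i : Fin K => (i : ℕ) < K / 2)
      (fun i => (if h : (i : ℕ) < K / 2 then Cr ⟨i, h⟩ else (Cc ⟨i, h⟩)ᵀ)
        (x i) (e.symm (r', c') i))]
    rw [hLfac, hRfac, hψ]
    ring
end

section
/- If two K-partite pure-state coefficient tensors φ, ψ : (Π i : Fin K, Fin (n i)) → ℂ (K ≥ 2, all n i ≥ 1) are SLOCC equivalent, then their coefficient matrices have equal rank: rank M(φ) = rank M(ψ). -/
open Matrix

section kronAux

variable {ι : Type*} [Fintype ι] [DecidableEq ι] {α : ι → Type*}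
  [∀ i, Fintype (α i)] [∀ i, DecidableEq (α i)]

/-- Multi-Kronecker product of a family of square matrices. -/
def kronPi (P : ∀ i, Matrix (α i) (α i) ℂ) : Matrix (∀ i, α i) (∀ i, α i) ℂ :=
  Matrix.of fun x y => ∏ i, P i (x i) (y i)

lemma kronPi_mul (P Q : ∀ i, Matrix (α i) (α i) ℂ) :
    kronPi P * kronPi Q = kronPi (fun i => P i * Q i) := by
  ext x z
  simp only [kronPi, Matrix.mul_apply, Matrix.of_apply, ← Finset.prod_mul_distrib]
  rw [Finset.prod_univ_sum, Fintype.piFinset_univ]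

lemma kronPi_one : kronPi (fun i => (1 : Matrix (α i) (α i) ℂ)) = 1 := by
  ext x y
  simp only [kronPi, Matrix.of_apply, Matrix.one_apply]
  by_cases h : x = y
  · subst h; simp
  · rw [if_neg h]
    obtain ⟨i, hi⟩ := Function.ne_iff.mp h
    exact Finset.prod_eq_zero (Finset.mem_univ i) (if_neg hi)

lemma kronPi_isUnit_det {P : ∀ i, Matrix (α i) (α i) ℂ} (hP : ∀ i, IsUnit (P i)) :
    IsUnit (kronPi P).det := by
  have h : kronPi P * kronPi (fun i => (((hP i).unit⁻¹ : _) : Matrix (α i) (α i) ℂ)) = 1 := by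
    rw [kronPi_mul]
    have he : (fun i => P i * (((hP i).unit⁻¹ : _) : Matrix (α i) (α i) ℂ)) = fun _ => 1 := by
      funext i
      exact (hP i).mul_val_inv
    rw [he, kronPi_one]
  exact Matrix.isUnit_det_of_right_inverse h
end kronAux

/-- SLOCC-equivalent `K`-partite pure-state coefficient tensors have coefficient
matrices of equal rank. -/
theorem coeffMatrix_rank_eq_of_slocc (K : ℕ) (hK : 2 ≤ K) (n : Fin K → ℕ)
    (hn : ∀ i, 1 ≤ n i) (φ ψ : (∀ i, Fin (n i)) → ℂ)
    (hslocc : ∃ C : ∀ i, Matrix (Fin (n i)) (Fin (n i)) ℂ,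
      (∀ i, IsUnit (C i)) ∧ ∀ x, φ x = ∑ y, (∏ i, C i (x i) (y i)) * ψ y) :
    (coeffMatrix (K / 2) φ).rank = (coeffMatrix (K / 2) ψ).rank := by
  obtain ⟨C, hC, hφ⟩ := hslocc
  set t := K / 2
  set A : Matrix (∀ i : {i : Fin K // (i : ℕ) < t}, Fin (n i))
      (∀ i : {i : Fin K // (i : ℕ) < t}, Fin (n i)) ℂ :=
    kronPi fun i => C i.1 with hA
  set B : Matrix (∀ i : {i : Fin K // ¬ (i : ℕ) < t}, Fin (n i))
      (∀ i : {i : Fin K // ¬ (i : ℕ) < t}, Fin (n i)) ℂ :=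
    kronPi fun i => C i.1 with hB
  have key : coeffMatrix t φ = A * coeffMatrix t ψ * Bᵀ := by
    ext r c
    rw [Matrix.mul_apply]
    simp only [Matrix.mul_apply, Matrix.transpose_apply, Finset.sum_mul, Finset.mul_sum]
    rw [Finset.sum_comm]
    show coeffMatrix t φ r c = ∑ r', ∑ c', A r r' * coeffMatrix t ψ r' c' * B c c'
    have := hφ (fun i => if h : (i : ℕ) < t then r ⟨i, h⟩ else c ⟨i, h⟩)
    rw [show coeffMatrix t φ r c = φ (fun i => if h : (i : ℕ) < t then r ⟨i, h⟩ else c ⟨i, h⟩)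
      from rfl, this]
    rw [← (Equiv.piEquivPiSubtypeProd (fun i : Fin K => (i : ℕ) < t)
      (fun i => Fin (n i))).symm.sum_comp, Fintype.sum_prod_type]
    refine Finset.sum_congr rfl fun r' _ => ?_
    refine Finset.sum_congr rfl fun c' _ => ?_
    have hψ : ψ ((Equiv.piEquivPiSubtypeProd (fun i : Fin K => (i : ℕ) < t)
        (fun i => Fin (n i))).symm (r', c')) = coeffMatrix t ψ r' c' := rfl
    rw [hψ]
    rw [← Fintype.prod_subtype_mul_prod_subtype (fun i : Fin K => (i : ℕ) < t)
      (fun i => C i ((if h : (i : ℕ) < t then r ⟨i, h⟩ else c ⟨i, h⟩))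
        ((Equiv.piEquivPiSubtypeProd (fun i : Fin K => (i : ℕ) < t)
          (fun i => Fin (n i))).symm (r', c') i))]
    have h1 : ∀ i : {i : Fin K // (i : ℕ) < t},
        C i.1 ((if h : (i.1 : ℕ) < t then r ⟨i.1, h⟩ else c ⟨i.1, h⟩))
          ((Equiv.piEquivPiSubtypeProd (fun i : Fin K => (i : ℕ) < t)
            (fun i => Fin (n i))).symm (r', c') i.1) = C i.1 (r i) (r' i) := by
      rintro ⟨i, hi⟩
      simp [Equiv.piEquivPiSubtypeProd, hi]
    have h2 : ∀ i : {i : Fin K // ¬ (i : ℕ) < t},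
        C i.1 ((if h : (i.1 : ℕ) < t then r ⟨i.1, h⟩ else c ⟨i.1, h⟩))
          ((Equiv.piEquivPiSubtypeProd (fun i : Fin K => (i : ℕ) < t)
            (fun i => Fin (n i))).symm (r', c') i.1) = C i.1 (c i) (c' i) := by
      rintro ⟨i, hi⟩
      simp [Equiv.piEquivPiSubtypeProd, hi]
    rw [Finset.prod_congr rfl fun i _ => h1 i, Finset.prod_congr rfl fun i _ => h2 i]
    show (A r r' * B c c') * coeffMatrix t ψ r' c' = A r r' * coeffMatrix t ψ r' c' * B c c'
    ring
  rw [key, Matrix.rank_mul_eq_left_of_isUnit_det _ _ (by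
      rw [Matrix.det_transpose]; exact kronPi_isUnit_det fun i => hC i.1),
    Matrix.rank_mul_eq_right_of_isUnit_det _ _ (kronPi_isUnit_det fun i => hC i.1)]
end

section
/- For positive reals a, b, c, let K = 3/2 + a + b + c + 1/a + 1/b + 1/c, and define three-qubit mixed states (8×8 complex matrices indexed by the computational basis ordered |000⟩,…,|111⟩): ρ₁ = (1/K)·[diagonal (1, a, b, c, 1/c, 1/b, 1/a, 1) with additional entries 1/2 at positions (|000⟩,|111⟩) and (|111⟩,|000⟩)], and ρ₂ the matrix given entrywise by ρ₂ = (1/(2K))·[[1+b,0,1−b,0,0,−1/2,0,1/2],[0,a+c,0,a−c,0,0,0,0],[1−b,0,1+b,0,0,−1/2,0,1/2],[0,a−c,0,a+c,0,0,0,0],[0,0,0,0,1/c+1/a,0,1/c−1/a,0],[−1/2,0,−1/2,0,0,1/b+1,0,1/b−1],[0,0,0,0,1/c−1/a,0,1/c+1/a,0],[1/2,0,1/2,0,0,1/b−1,0,1/b+1]]. Then ρ₂ = (I ⊗ U ⊗ I) ρ₁ (I ⊗ U ⊗ I)†, where U = (1/√2)·[[1,−1],[1,1]] and I is the 2×2 identity;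 in particular ρ₁ and ρ₂ are SLOCC equivalent. -/
open Matrix

/-- Encoding of the three-qubit computational basis `|i₁i₂i₃⟩` into `Fin 8`,
ordered `|000⟩, |001⟩, …, |111⟩`. -/
def enc3 (x : Fin 2 × Fin 2 × Fin 2) : Fin 8 :=
  ⟨4 * x.1.val + 2 * x.2.1.val + x.2.2.val, by
    have h1 := x.1.isLt; have h2 := x.2.1.isLt; have h3 := x.2.2.isLt; omega⟩

/-- The state `ρ₁` of Example 3: `(1/K)` times the matrix with diagonal
`(1, a, b, c, 1/c, 1/b, 1/a, 1)` and entries `1/2` at `(|000⟩,|111⟩)` and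
`(|111⟩,|000⟩)`. -/
noncomputable def rho1Ex (a b c : ℝ) :
    Matrix (Fin 2 × Fin 2 × Fin 2) (Fin 2 × Fin 2 × Fin 2) ℂ :=
  ((3/2 + a + b + c + 1/a + 1/b + 1/c : ℝ) : ℂ)⁻¹ • Matrix.of fun x y =>
    (!![1, 0, 0, 0, 0, 0, 0, 1/2;
        0, (a : ℂ), 0, 0, 0, 0, 0, 0;
        0, 0, (b : ℂ), 0, 0, 0, 0, 0;
        0, 0, 0, (c : ℂ), 0, 0, 0, 0;
        0, 0, 0, 0, 1/(c : ℂ), 0, 0, 0;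
        0, 0, 0, 0, 0, 1/(b : ℂ), 0, 0;
        0, 0, 0, 0, 0, 0, 1/(a : ℂ), 0;
        1/2, 0, 0, 0, 0, 0, 0, 1] : Matrix (Fin 8) (Fin 8) ℂ) (enc3 x) (enc3 y)

/-- The state `ρ₂` of Example 3, given entrywise. -/
noncomputable def rho2Ex (a b c : ℝ) :
    Matrix (Fin 2 × Fin 2 × Fin 2) (Fin 2 × Fin 2 × Fin 2) ℂ :=
  ((2 * (3/2 + a + b + c + 1/a + 1/b + 1/c) : ℝ) : ℂ)⁻¹ • Matrix.of fun x y =>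
    (!![1 + (b : ℂ), 0, 1 - (b : ℂ), 0, 0, -(1/2), 0, 1/2;
        0, (a : ℂ) + (c : ℂ), 0, (a : ℂ) - (c : ℂ), 0, 0, 0, 0;
        1 - (b : ℂ), 0, 1 + (b : ℂ), 0, 0, -(1/2), 0, 1/2;
        0, (a : ℂ) - (c : ℂ), 0, (a : ℂ) + (c : ℂ), 0, 0, 0, 0;
        0, 0, 0, 0, 1/(c : ℂ) + 1/(a : ℂ), 0, 1/(c : ℂ) - 1/(a : ℂ), 0;
        -(1/2), 0, -(1/2), 0, 0, 1/(b : ℂ) + 1, 0, 1/(b : ℂ) - 1;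
        0, 0, 0, 0, 1/(c : ℂ) - 1/(a : ℂ), 0, 1/(c : ℂ) + 1/(a : ℂ), 0;
        1/2, 0, 1/2, 0, 0, 1/(b : ℂ) - 1, 0, 1/(b : ℂ) + 1] :
      Matrix (Fin 8) (Fin 8) ℂ) (enc3 x) (enc3 y)

/-- The local unitary `U = (1/√2)·[[1,−1],[1,1]]`. -/
noncomputable def Uloc : Matrix (Fin 2) (Fin 2) ℂ :=
  ((Real.sqrt 2 : ℝ) : ℂ)⁻¹ • !![1, -1; 1, 1]

/-! ### Auxiliary machinery -/

open Kronecker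

/-- `I ⊗ U ⊗ I` as a matrix on the three-qubit index type. -/
noncomputable def Tmid (U : Matrix (Fin 2) (Fin 2) ℂ) :
    Matrix (Fin 2 × Fin 2 × Fin 2) (Fin 2 × Fin 2 × Fin 2) ℂ :=
  Matrix.of fun x y => (1 : Matrix (Fin 2) (Fin 2) ℂ) x.1 y.1 * U x.2.1 y.2.1 *
    (1 : Matrix (Fin 2) (Fin 2) ℂ) x.2.2 y.2.2

lemma Tmid_eq (U : Matrix (Fin 2) (Fin 2) ℂ) :
    Tmid U = (1 : Matrix (Fin 2) (Fin 2) ℂ) ⊗ₖ (U ⊗ₖ (1 : Matrix (Fin 2) (Fin 2) ℂ)) := by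
  ext ⟨x1, x2, x3⟩ ⟨y1, y2, y3⟩
  simp [Tmid, Matrix.kroneckerMap_apply, mul_assoc]

lemma kron_conjT {m n p q : Type*} (A : Matrix m n ℂ) (B : Matrix p q ℂ) :
    (A ⊗ₖ B)ᴴ = Aᴴ ⊗ₖ Bᴴ := by
  ext ⟨i, j⟩ ⟨k, l⟩
  simp [Matrix.conjTranspose_apply, Matrix.kroneckerMap_apply, star_mul', mul_comm]

lemma Tmid_mul (A B : Matrix (Fin 2) (Fin 2) ℂ) : Tmid A * Tmid B = Tmid (A * B) := by
  rw [Tmid_eq, Tmid_eq, Tmid_eq, ← Matrix.mul_kronecker_mul, ← Matrix.mul_kronecker_mul,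
    mul_one (1 : Matrix (Fin 2) (Fin 2) ℂ)]

lemma Tmid_conjT (A : Matrix (Fin 2) (Fin 2) ℂ) : (Tmid A)ᴴ = Tmid Aᴴ := by
  simp [Tmid_eq, kron_conjT]

lemma Tmid_one : Tmid 1 = 1 := by
  rw [Tmid_eq, Matrix.one_kronecker_one, Matrix.one_kronecker_one]

/-- Decoding `Fin 8` back into three bits. -/
def dec3 (n : Fin 8) : Fin 2 × Fin 2 × Fin 2 :=
  (⟨n.val / 4, by omega⟩, ⟨n.val / 2 % 2, by omega⟩, ⟨n.val % 2, by omega⟩)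

lemma dec3_enc3 : dec3 ∘ enc3 = id := by
  funext x; revert x; decide

/-- `enc3` as an equivalence. -/
def enc3Equiv : (Fin 2 × Fin 2 × Fin 2) ≃ Fin 8 where
  toFun := enc3
  invFun := dec3
  left_inv := by decide
  right_inv := by decide

section vecmk
variable {α : Type*} (x0 x1 : α)
lemma vmk0 (h : 0 < 2) : ![x0, x1] ⟨0, h⟩ = x0 := rfl
lemma vmk1 (h : 1 < 2) : ![x0, x1] ⟨1, h⟩ = x1 := rfl
end vecmk

/-! ### The `Fin 8` matrices -/

noncomputable def M1mat (a b c : ℝ) : Matrix (Fin 8) (Fin 8) ℂ :=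
  !![1, 0, 0, 0, 0, 0, 0, 1/2;
     0, (a : ℂ), 0, 0, 0, 0, 0, 0;
     0, 0, (b : ℂ), 0, 0, 0, 0, 0;
     0, 0, 0, (c : ℂ), 0, 0, 0, 0;
     0, 0, 0, 0, 1/(c : ℂ), 0, 0, 0;
     0, 0, 0, 0, 0, 1/(b : ℂ), 0, 0;
     0, 0, 0, 0, 0, 0, 1/(a : ℂ), 0;
     1/2, 0, 0, 0, 0, 0, 0, 1]

noncomputable def M2mat (a b c : ℝ) : Matrix (Fin 8) (Fin 8) ℂ :=
  !![1 + (b : ℂ), 0, 1 - (b : ℂ), 0, 0, -(1/2), 0, 1/2;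
     0, (a : ℂ) + (c : ℂ), 0, (a : ℂ) - (c : ℂ), 0, 0, 0, 0;
     1 - (b : ℂ), 0, 1 + (b : ℂ), 0, 0, -(1/2), 0, 1/2;
     0, (a : ℂ) - (c : ℂ), 0, (a : ℂ) + (c : ℂ), 0, 0, 0, 0;
     0, 0, 0, 0, 1/(c : ℂ) + 1/(a : ℂ), 0, 1/(c : ℂ) - 1/(a : ℂ), 0;
     -(1/2), 0, -(1/2), 0, 0, 1/(b : ℂ) + 1, 0, 1/(b : ℂ) - 1;
     0, 0, 0, 0, 1/(c : ℂ) - 1/(a : ℂ), 0, 1/(c : ℂ) + 1/(a : ℂ), 0;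
     1/2, 0, 1/2, 0, 0, 1/(b : ℂ) - 1, 0, 1/(b : ℂ) + 1]

def Bmat : Matrix (Fin 8) (Fin 8) ℂ :=
  !![1,0,-1,0,0,0,0,0;
     0,1,0,-1,0,0,0,0;
     1,0,1,0,0,0,0,0;
     0,1,0,1,0,0,0,0;
     0,0,0,0,1,0,-1,0;
     0,0,0,0,0,1,0,-1;
     0,0,0,0,1,0,1,0;
     0,0,0,0,0,1,0,1]

def Btmat : Matrix (Fin 8) (Fin 8) ℂ :=
  !![1,0,1,0,0,0,0,0;
     0,1,0,1,0,0,0,0;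
     -1,0,1,0,0,0,0,0;
     0,-1,0,1,0,0,0,0;
     0,0,0,0,1,0,1,0;
     0,0,0,0,0,1,0,1;
     0,0,0,0,-1,0,1,0;
     0,0,0,0,0,-1,0,1]

noncomputable def Pmat (a b c : ℝ) : Matrix (Fin 8) (Fin 8) ℂ :=
  !![1, 0, -(b:ℂ), 0, 0, 0, 0, 1/2;
     0, (a:ℂ), 0, -(c:ℂ), 0, 0, 0, 0;
     1, 0, (b:ℂ), 0, 0, 0, 0, 1/2;
     0, (a:ℂ), 0, (c:ℂ), 0, 0, 0, 0;
     0, 0, 0, 0, 1/(c:ℂ), 0, -(1/(a:ℂ)), 0;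
     -(1/2), 0, 0, 0, 0, 1/(b:ℂ), 0, -1;
     0, 0, 0, 0, 1/(c:ℂ), 0, 1/(a:ℂ), 0;
     1/2, 0, 0, 0, 0, 1/(b:ℂ), 0, 1]

set_option maxHeartbeats 1000000 in
lemma hBM1 (a b c : ℝ) : Bmat * M1mat a b c = Pmat a b c := by
  rw [← Matrix.ext_iff]
  simp only [Bmat, M1mat, Pmat, Matrix.mul_apply, Fin.sum_univ_succ, Fin.forall_fin_succ,
    Matrix.cons_val_zero, Matrix.cons_val_succ, Matrix.of_apply, Finset.univ_eq_empty,
    Finset.sum_empty, IsEmpty.forall_iff, and_true]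
  norm_num [sub_eq_add_neg]

set_option maxHeartbeats 1000000 in
lemma hPBt (a b c : ℝ) : Pmat a b c * Btmat = M2mat a b c := by
  rw [← Matrix.ext_iff]
  simp only [Btmat, M2mat, Pmat, Matrix.mul_apply, Fin.sum_univ_succ, Fin.forall_fin_succ,
    Matrix.cons_val_zero, Matrix.cons_val_succ, Matrix.of_apply, Finset.univ_eq_empty,
    Finset.sum_empty, IsEmpty.forall_iff, and_true]
  norm_num [sub_eq_add_neg]

set_option maxHeartbeats 1000000 in
lemma hBt : Bmatᴴ = Btmat := by
  rw [← Matrix.ext_iff]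
  simp only [Bmat, Btmat, Matrix.conjTranspose_apply, Fin.forall_fin_succ,
    Matrix.cons_val_zero, Matrix.cons_val_succ, Matrix.of_apply, IsEmpty.forall_iff, and_true]
  norm_num

set_option maxHeartbeats 1000000 in
lemma hB : Bmat = (Tmid !![1,-1;1,1]).submatrix dec3 dec3 := by
  rw [← Matrix.ext_iff]
  simp only [Bmat, Tmid, dec3, Matrix.submatrix_apply, Matrix.of_apply, Fin.forall_fin_succ,
    Matrix.cons_val_zero, Matrix.cons_val_succ, IsEmpty.forall_iff, and_true,
    Fin.val_succ, Fin.val_zero, Matrix.one_apply, vmk0, vmk1]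
  norm_num [Fin.mk.injEq, Prod.ext_iff, vmk0, vmk1]

lemma hT0 : Tmid Uloc = ((Real.sqrt 2 : ℝ) : ℂ)⁻¹ • Tmid !![1,-1;1,1] := by
  ext x y
  simp only [Tmid, Uloc, Matrix.of_apply, Matrix.smul_apply, smul_eq_mul]
  ring

lemma hT : Tmid Uloc = ((Real.sqrt 2 : ℝ) : ℂ)⁻¹ • (Bmat.submatrix enc3 enc3) := by
  rw [hT0, hB, Matrix.submatrix_submatrix, dec3_enc3, Matrix.submatrix_id_id]

lemma hstar : star (((Real.sqrt 2 : ℝ) : ℂ)⁻¹) = ((Real.sqrt 2 : ℝ) : ℂ)⁻¹ := by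
  simp [Complex.star_def, map_inv₀, Complex.conj_ofReal]

lemma hs2 : ((Real.sqrt 2 : ℝ) : ℂ) * ((Real.sqrt 2 : ℝ) : ℂ) = 2 := by
  norm_cast
  exact Real.mul_self_sqrt (by norm_num)

lemma hinv : ((Real.sqrt 2 : ℝ) : ℂ)⁻¹ * ((Real.sqrt 2 : ℝ) : ℂ)⁻¹ = 2⁻¹ := by
  rw [← mul_inv, hs2]

set_option maxHeartbeats 1000000 in
lemma hVV : (!![1,1;-1,1] : Matrix (Fin 2) (Fin 2) ℂ) * !![1,-1;1,1] = !![2,0;0,2] := by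
  rw [← Matrix.ext_iff]
  simp only [Matrix.mul_apply, Fin.sum_univ_succ, Fin.forall_fin_succ,
    Matrix.cons_val_zero, Matrix.cons_val_succ, Matrix.of_apply, Finset.univ_eq_empty,
    Finset.sum_empty, IsEmpty.forall_iff, and_true]
  norm_num

set_option maxHeartbeats 1000000 in
lemma hVt : (!![1,-1;1,1] : Matrix (Fin 2) (Fin 2) ℂ)ᴴ = !![1,1;-1,1] := by
  rw [← Matrix.ext_iff]
  simp only [Matrix.conjTranspose_apply, Fin.forall_fin_succ,
    Matrix.cons_val_zero, Matrix.cons_val_succ, Matrix.of_apply, IsEmpty.forall_iff, and_true]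
  norm_num

set_option maxHeartbeats 1000000 in
lemma htwo : ((2:ℂ)⁻¹) • (!![2,0;0,2] : Matrix (Fin 2) (Fin 2) ℂ) = 1 := by
  rw [← Matrix.ext_iff]
  simp only [Matrix.smul_apply, Fin.forall_fin_succ, Matrix.cons_val_zero,
    Matrix.cons_val_succ, Matrix.of_apply, IsEmpty.forall_iff, and_true, Matrix.one_apply,
    smul_eq_mul]
  norm_num [Fin.ext_iff]

lemma hUU : Ulocᴴ * Uloc = 1 := by
  rw [Uloc, Matrix.conjTranspose_smul, hstar, hVt, Matrix.smul_mul, Matrix.mul_smul,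
    smul_smul, hinv, hVV, htwo]

lemma hUU' : Uloc * Ulocᴴ = 1 := mul_eq_one_comm.mp hUU

/-- Example 3: `ρ₂ = (I ⊗ U ⊗ I) ρ₁ (I ⊗ U ⊗ I)†`, and in particular `ρ₁`
and `ρ₂` are SLOCC equivalent. -/
theorem rho2_eq_conj_rho1 (a b c : ℝ) (ha : 0 < a) (hb : 0 < b) (hc : 0 < c) :
    rho2Ex a b c =
      (Matrix.of fun x y : Fin 2 × Fin 2 × Fin 2 =>
          (1 : Matrix (Fin 2) (Fin 2) ℂ) x.1 y.1 * Uloc x.2.1 y.2.1 *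
            (1 : Matrix (Fin 2) (Fin 2) ℂ) x.2.2 y.2.2) *
        rho1Ex a b c *
        (Matrix.of fun x y : Fin 2 × Fin 2 × Fin 2 =>
          (1 : Matrix (Fin 2) (Fin 2) ℂ) x.1 y.1 * Uloc x.2.1 y.2.1 *
            (1 : Matrix (Fin 2) (Fin 2) ℂ) x.2.2 y.2.2)ᴴ ∧
    ∃ a₁ a₂ a₃ : Matrix (Fin 2) (Fin 2) ℂ,
      IsUnit a₁ ∧ IsUnit a₂ ∧ IsUnit a₃ ∧
      rho1Ex a b c =
        (Matrix.of fun x y : Fin 2 × Fin 2 × Fin 2 =>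
            a₁ x.1 y.1 * a₂ x.2.1 y.2.1 * a₃ x.2.2 y.2.2) *
          rho2Ex a b c *
          (Matrix.of fun x y : Fin 2 × Fin 2 × Fin 2 =>
            a₁ x.1 y.1 * a₂ x.2.1 y.2.1 * a₃ x.2.2 y.2.2)ᴴ := by
  have hsub_mul : ∀ A B : Matrix (Fin 8) (Fin 8) ℂ,
      A.submatrix enc3 enc3 * B.submatrix enc3 enc3 = (A * B).submatrix enc3 enc3 :=
    fun A B => Matrix.submatrix_mul_equiv A B enc3 enc3Equiv enc3
  have h1 : rho2Ex a b c = Tmid Uloc * rho1Ex a b c * (Tmid Uloc)ᴴ := by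
    rw [show rho1Ex a b c = ((3/2 + a + b + c + 1/a + 1/b + 1/c : ℝ) : ℂ)⁻¹ •
        (M1mat a b c).submatrix enc3 enc3 from rfl,
      show rho2Ex a b c = ((2 * (3/2 + a + b + c + 1/a + 1/b + 1/c) : ℝ) : ℂ)⁻¹ •
        (M2mat a b c).submatrix enc3 enc3 from rfl,
      hT, Matrix.conjTranspose_smul, hstar, Matrix.conjTranspose_submatrix, hBt]
    rw [Matrix.smul_mul, Matrix.mul_smul, Matrix.smul_mul, Matrix.mul_smul, Matrix.smul_mul,
      smul_smul, smul_smul, hsub_mul, hBM1, hsub_mul, hPBt]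
    congr 1
    push_cast
    rw [mul_inv, ← hinv]
    try ring
  refine ⟨h1, 1, Ulocᴴ, 1, isUnit_one, ⟨⟨Ulocᴴ, Uloc, hUU, hUU'⟩, rfl⟩, isUnit_one, ?_⟩
  show rho1Ex a b c = Tmid Ulocᴴ * rho2Ex a b c * (Tmid Ulocᴴ)ᴴ
  rw [h1, Tmid_conjT, Tmid_conjT, Matrix.conjTranspose_conjTranspose]
  have key : Tmid Ulocᴴ * Tmid Uloc = 1 := by rw [Tmid_mul, hUU, Tmid_one]
  have gen : ∀ A B ρ : Matrix (Fin 2 × Fin 2 × Fin 2) (Fin 2 × Fin 2 × Fin 2) ℂ,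
      A * B = 1 → A * (B * ρ * A) * B = ρ := by
    intro A B ρ h
    have : A * (B * ρ * A) * B = (A * B) * ρ * (A * B) := by
      simp only [mul_assoc]
    rw [this, h, one_mul, mul_one]
  exact (gen _ _ _ key).symm
end
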